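/- Let D ⊆ L(Ω) be a set of gambles that avoids sure loss, and let g be a gamble. Then D ∪ {g − α} avoids sure loss if and only if α ≤ Ē_D(g), where Ē_D(g) := inf over n ∈ ℕ, nonnegative λ₁,…,λₙ, and f₁,…,fₙ ∈ D of max_{ω∈Ω} (g(ω) + Σᵢ λᵢ fᵢ(ω)). -/
import Mathlib


/-- A set of gambles avoids sure loss. -/
def AvoidsSureLoss {Ω : Type*} [Fintype Ω] (D : Set (Ω → ℝ)) : Prop :=
  ∀ (n : ℕ) (lam : Fin n → ℝ) (f : Fin n → Ω → ℝ),
    (∀ i, 0 ≤ lam i) → (∀ i, f i ∈ D) →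
    ∃ ω : Ω, 0 ≤ ∑ i, lam i * f i ω

/-- Upper natural extension of `D` at `g`. -/
noncomputable def upperNatExt {Ω : Type*} [Fintype Ω] [Nonempty Ω]
    (D : Set (Ω → ℝ)) (g : Ω → ℝ) : ℝ :=
  sInf {x : ℝ | ∃ (n : ℕ) (lam : Fin n → ℝ) (f : Fin n → Ω → ℝ),
    (∀ i, 0 ≤ lam i) ∧ (∀ i, f i ∈ D) ∧
    x = Finset.univ.sup' Finset.univ_nonempty
      (fun ω => g ω + ∑ i, lam i * f i ω)}

theorem asl_union_iff_le_upperNatExt {Ω : Type*} [Fintype Ω] [Nonempty Ω]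
    (D : Set (Ω → ℝ)) (hD : AvoidsSureLoss D) (g : Ω → ℝ) (α : ℝ) :
    AvoidsSureLoss (D ∪ {fun ω => g ω - α}) ↔ α ≤ upperNatExt D g := by
  classical
  have hΩ : (Finset.univ : Finset Ω).Nonempty := Finset.univ_nonempty
  set S : Set ℝ := {x : ℝ | ∃ (n : ℕ) (lam : Fin n → ℝ) (f : Fin n → Ω → ℝ),
    (∀ i, 0 ≤ lam i) ∧ (∀ i, f i ∈ D) ∧
    x = Finset.univ.sup' Finset.univ_nonempty
      (fun ω => g ω + ∑ i, lam i * f i ω)} with hSdef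
  have hUNE : upperNatExt D g = sInf S := rfl
  have hSne : S.Nonempty :=
    ⟨_, 0, (fun i => i.elim0), (fun i => i.elim0), fun i => i.elim0, fun i => i.elim0, rfl⟩
  have hSbdd : BddBelow S := by
    refine ⟨Finset.univ.inf' hΩ g, fun x hx => ?_⟩
    obtain ⟨n, lam, f, hlam, hf, rfl⟩ := hx
    obtain ⟨ω, hω⟩ := hD n lam f hlam hf
    calc Finset.univ.inf' hΩ g ≤ g ω := Finset.inf'_le _ (Finset.mem_univ ω)
      _ ≤ g ω + ∑ i, lam i * f i ω := le_add_of_nonneg_right hω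
      _ ≤ _ := Finset.le_sup' (fun ω => g ω + ∑ i, lam i * f i ω) (Finset.mem_univ ω)
  rw [hUNE]
  constructor
  · -- forward
    intro h
    refine le_csInf hSne ?_
    rintro x ⟨n, lam, f, hlam, hf, rfl⟩
    obtain ⟨ω, hω⟩ := h (n+1) (Fin.cons 1 lam) (Fin.cons (fun ω => g ω - α) f)
      (by
        intro i
        induction i using Fin.cases with
        | zero => simp
        | succ j => simpa using hlam j)
      (by
        intro i
        induction i using Fin.cases with
        | zero => simp only [Fin.cons_zero]; exact Or.inr rfl
        | succ j => simp only [Fin.cons_succ]; exact Or.inl (hf j))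
    rw [Fin.sum_univ_succ] at hω
    simp only [Fin.cons_zero, Fin.cons_succ, one_mul] at hω
    have hle : α ≤ g ω + ∑ i, lam i * f i ω := by linarith
    exact hle.trans (Finset.le_sup' (fun ω => g ω + ∑ i, lam i * f i ω) (Finset.mem_univ ω))
  · -- backward
    intro hα n lam f hlam hf
    by_cases hDne : D.Nonempty
    · obtain ⟨g0, hg0⟩ := hDne
      set p : Fin n → Prop := fun i => f i ∈ D with hp
      set lam' : Fin n → ℝ := fun i => if p i then lam i else 0 with hlam'def
      set f' : Fin n → Ω → ℝ := fun i => if p i then f i else g0 with hf'def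
      have hlam' : ∀ i, 0 ≤ lam' i := by
        intro i
        by_cases hpi : p i <;> simp [hlam'def, hpi, hlam i]
      have hf' : ∀ i, f' i ∈ D := by
        intro i
        by_cases hpi : p i
        · simp only [hf'def, if_pos hpi]; exact hpi
        · simpa [hf'def, hpi] using hg0
      set μ : ℝ := ∑ i, (if p i then 0 else lam i) with hμdef
      have hμ0 : 0 ≤ μ := Finset.sum_nonneg fun i _ => by
        by_cases hpi : p i <;> simp [hpi, hlam i]
      have hkey : ∀ ω, ∑ i, lam i * f i ω =
          (∑ i, lam' i * f' i ω) + μ * (g ω - α) := by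
        intro ω
        rw [hμdef, Finset.sum_mul, ← Finset.sum_add_distrib]
        refine Finset.sum_congr rfl fun i _ => ?_
        by_cases hpi : p i
        · simp [hlam'def, hf'def, hpi]
        · have hfi : f i = fun ω => g ω - α := by
            rcases hf i with h' | h'
            · exact absurd h' hpi
            · exact h'
          simp [hlam'def, hf'def, hpi, hfi]
      rcases eq_or_lt_of_le hμ0 with hμz | hμpos
      · obtain ⟨ω, hω⟩ := hD n lam' f' hlam' hf'
        refine ⟨ω, ?_⟩
        rw [hkey ω, ← hμz]
        simpa using hω
      · -- μ > 0
        set x : ℝ := Finset.univ.sup' Finset.univ_nonempty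
          (fun ω => g ω + ∑ i, (lam' i / μ) * f' i ω) with hxdef
        have hxS : x ∈ S :=
          ⟨n, fun i => lam' i / μ, f',
            fun i => div_nonneg (hlam' i) hμ0, hf', rfl⟩
        have hαx : α ≤ x := hα.trans (csInf_le hSbdd hxS)
        obtain ⟨ω, -, hωx⟩ := Finset.exists_mem_eq_sup' Finset.univ_nonempty
          (fun ω => g ω + ∑ i, (lam' i / μ) * f' i ω)
        refine ⟨ω, ?_⟩
        rw [hkey ω]
        have hsum : ∑ i, lam' i * f' i ω = μ * ∑ i, (lam' i / μ) * f' i ω := by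
          rw [Finset.mul_sum]
          refine Finset.sum_congr rfl fun i _ => ?_
          field_simp
        have h1 : α ≤ g ω + ∑ i, (lam' i / μ) * f' i ω := by
          rw [hxdef] at hαx; rw [hωx] at hαx; exact hαx
        rw [hsum]
        nlinarith [hμpos, h1]
    · -- D empty
      have hμ0 : 0 ≤ ∑ i, lam i := Finset.sum_nonneg fun i _ => hlam i
      have hfall : ∀ i, f i = fun ω => g ω - α := by
        intro i
        rcases hf i with h' | h'
        · exact absurd ⟨f i, h'⟩ hDne
        · exact h'
      have hx0S : (Finset.univ.sup' Finset.univ_nonempty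
          (fun ω => g ω + ∑ i : Fin 0, (0 : Fin 0 → ℝ) i * (fun _ : Fin 0 => g) i ω)) ∈ S :=
        ⟨0, 0, fun _ => g, fun i => i.elim0, fun i => i.elim0, rfl⟩
      have hαx : α ≤ Finset.univ.sup' Finset.univ_nonempty
          (fun ω => g ω + ∑ i : Fin 0, (0 : Fin 0 → ℝ) i * (fun _ : Fin 0 => g) i ω) :=
        hα.trans (csInf_le hSbdd hx0S)
      obtain ⟨ω, -, hωx⟩ := Finset.exists_mem_eq_sup' (Finset.univ_nonempty (α := Ω))
        (fun ω => g ω + ∑ i : Fin 0, (0 : Fin 0 → ℝ) i * (fun _ : Fin 0 => g) i ω)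
      refine ⟨ω, ?_⟩
      have hαg : α ≤ g ω := by
        rw [hωx] at hαx; simpa using hαx
      have : ∀ ω', ∑ i, lam i * f i ω' = (∑ i, lam i) * (g ω' - α) := by
        intro ω'
        rw [Finset.sum_mul]
        refine Finset.sum_congr rfl fun i _ => ?_
        rw [hfall i]
      rw [this ω]
      exact mul_nonneg hμ0 (by linarith)
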